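/- If φ is a context formula for c with respect to 𝕊, then for every t ≥ 1 the time-bounded probability satisfies P_K(c[1:t]) = Σ over paths W : Fin t → (V → Bool) such that W i satisfies φ for at least one i, of π_t(W). -/

import Mathlib

open scoped ENNReal

namespace DBL

variable {I A C V : Type*}

/-- A world `W` satisfies the context `κ` if it agrees with `κ` wherever it is defined. -/
def SatCtx (W : V → Bool) (κ : V → Option Bool) : Prop :=
  ∀ v b, κ v = some b → W v = b

/-- The ontology induced by the world `W` from the `V`-ontology `𝕊`. -/
def OW (𝕊 : Finset (A × (V → Option Bool))) (W : V → Bool) : Set A :=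
  {α | ∃ κ, (α, κ) ∈ 𝕊 ∧ SatCtx W κ}

/-- `i` is a model of the ontology `O`. -/
def IsOntModel (satA : I → A → Prop) (O : Set A) (i : I) : Prop :=
  ∀ α ∈ O, satA i α

/-- The ontology `O` entails the consequence `c`. -/
def Entails (satA : I → A → Prop) (satC : I → C → Prop) (O : Set A) (c : C) : Prop :=
  ∀ i : I, IsOntModel satA O i → satC i c

/-- The `t`-step path distribution of the Markov chain with initial distribution `μ` and
transition kernel `T`: `π_t(W) = μ(W 0) · ∏_{i < t-1} T(W i)(W (i+1))`. -/
noncomputable def pathProb {S : Type*} (μ : PMF S) (T : S → PMF S)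
    (t : ℕ) (W : Fin t → S) : ℝ≥0∞ :=
  if h : 0 < t then
    μ (W ⟨0, h⟩) * ∏ i : Fin (t - 1),
      T (W ⟨(i : ℕ), by have := i.2; omega⟩) (W ⟨(i : ℕ) + 1, by have := i.2; omega⟩)
  else 1

/-- A `t`-step probabilistic interpretation `q` (a finitely supported PMF on pairs of a
tuple of interpretations and a path of worlds) is a `t`-step model of `((μ, T), 𝕊)`. -/
def IsStepModel (satA : I → A → Prop) (μ : PMF (V → Bool))
    (T : (V → Bool) → PMF (V → Bool)) (𝕊 : Finset (A × (V → Option Bool))) (t : ℕ)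
    (q : PMF ((Fin t → I) × (Fin t → (V → Bool)))) : Prop :=
  q.support.Finite ∧
    (∀ iw ∈ q.support, ∀ s : Fin t, IsOntModel satA (OW 𝕊 (iw.2 s)) (iw.1 s)) ∧
    ∀ W : Fin t → (V → Bool), ∑' i : Fin t → I, q (i, W) = pathProb μ T t W

/-- `P_q(c[1:t])`: the `q`-probability that `c` is observed at some step `s < t`. -/
noncomputable def Pqt (satC : I → C → Prop) (t : ℕ)
    (q : PMF ((Fin t → I) × (Fin t → (V → Bool)))) (c : C) : ℝ≥0∞ :=
  ∑' iw : (Fin t → I) × (Fin t → (V → Bool)),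
    {x : (Fin t → I) × (Fin t → (V → Bool)) | ∃ s : Fin t, satC (x.1 s) c}.indicator (⇑q) iw

/-- `P_K(c[1:t])`: the infimum of `P_q(c[1:t])` over all `t`-step models `q` of the KB. -/
noncomputable def PKbound (satA : I → A → Prop) (satC : I → C → Prop)
    (μ : PMF (V → Bool)) (T : (V → Bool) → PMF (V → Bool))
    (𝕊 : Finset (A × (V → Option Bool))) (c : C) (t : ℕ) : ℝ≥0∞ :=
  sInf {x : ℝ≥0∞ | ∃ q : PMF ((Fin t → I) × (Fin t → (V → Bool))),
    IsStepModel satA μ T 𝕊 t q ∧ x = Pqt satC t q c}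


noncomputable def chainProb {S : Type*} (T : S → PMF S) : (n : ℕ) → S → (Fin n → S) → ℝ≥0∞
  | 0, _, _ => 1
  | n+1, s, W => T s (W 0) * chainProb T n (W 0) (Fin.tail W)

lemma chainProb_sum {S : Type*} [Fintype S] (T : S → PMF S) :
    ∀ (n : ℕ) (s : S), ∑ W : Fin n → S, chainProb T n s W = 1 := by
  intro n
  induction n with
  | zero => intro s; simp [chainProb]
  | succ n ih =>
    intro s
    rw [← Fintype.sum_equiv (Fin.consEquiv fun _ : Fin (n+1) => S)
      (fun p : S × (Fin n → S) => T s p.1 * chainProb T n p.1 p.2)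
      (chainProb T (n+1) s)
      (fun p => by simp [chainProb, Fin.consEquiv])]
    rw [Fintype.sum_prod_type]
    simp only [← Finset.mul_sum, ih, mul_one]
    rw [← tsum_fintype (L := SummationFilter.unconditional _)]
    exact (T s).tsum_coe

lemma chainProb_eq_prod {S : Type*} (T : S → PMF S) :
    ∀ (n : ℕ) (X : Fin (n+1) → S),
      chainProb T n (X 0) (Fin.tail X) = ∏ i : Fin n, T (X i.castSucc) (X i.succ) := by
  intro n
  induction n with
  | zero => intro X; simp [chainProb]
  | succ n ih =>
    intro X
    rw [Fin.prod_univ_succ]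
    have h : chainProb T n (Fin.tail X 0) (Fin.tail (Fin.tail X))
        = ∏ i : Fin n, T (Fin.tail X i.castSucc) (Fin.tail X i.succ) := ih (Fin.tail X)
    simp only [chainProb]
    rw [h]
    simp only [Fin.tail, Fin.succ_castSucc]
    rfl

lemma pathProb_succ {S : Type*} (μ : PMF S) (T : S → PMF S) (n : ℕ) (W : Fin (n+1) → S) :
    pathProb μ T (n+1) W = μ (W 0) * chainProb T n (W 0) (Fin.tail W) := by
  rw [pathProb, dif_pos n.succ_pos, chainProb_eq_prod]
  rfl

lemma pathProb_sum {S : Type*} [Fintype S] (μ : PMF S) (T : S → PMF S) (n : ℕ) :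
    ∑ W : Fin (n+1) → S, pathProb μ T (n+1) W = 1 := by
  rw [← Fintype.sum_equiv (Fin.consEquiv fun _ : Fin (n+1) => S)
    (fun p : S × (Fin n → S) => μ p.1 * chainProb T n p.1 p.2)
    (pathProb μ T (n+1))
    (fun p => by simp [pathProb_succ, Fin.consEquiv])]
  rw [Fintype.sum_prod_type]
  simp only [← Finset.mul_sum, chainProb_sum, mul_one]
  rw [← tsum_fintype (L := SummationFilter.unconditional _)]
  exact μ.tsum_coe

/-- if `φ` is a context formula for `c` w.r.t. `𝕊`, then for every `t ≥ 1`,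
`P_K(c[1:t]) = Σ over paths W hitting φ of π_t(W)`. -/
theorem time_bounded_entailment [Fintype V]
    (satA : I → A → Prop) (satC : I → C → Prop)
    (μ : PMF (V → Bool)) (T : (V → Bool) → PMF (V → Bool))
    (𝕊 : Finset (A × (V → Option Bool))) (c : C)
    (φ : (V → Bool) → Prop)
    (hφ : ∀ W : V → Bool, Entails satA satC (OW 𝕊 W) c ↔ φ W)
    (t : ℕ) (ht : 1 ≤ t)
    (hmod : ∀ W : V → Bool, ∃ i : I, IsOntModel satA (OW 𝕊 W) i) :
    PKbound satA satC μ T 𝕊 c t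
      = ∑' W : Fin t → (V → Bool),
          {W : Fin t → (V → Bool) | ∃ i : Fin t, φ (W i)}.indicator (pathProb μ T t) W := by
  classical
  obtain ⟨n, rfl⟩ : ∃ n, t = n + 1 := ⟨t - 1, (Nat.succ_pred_eq_of_pos ht).symm⟩
  -- choose interpretations realizing the context formula exactly
  have hiFun : ∀ W : V → Bool, ∃ i : I,
      IsOntModel satA (OW 𝕊 W) i ∧ (satC i c ↔ φ W) := by
    intro W
    by_cases h : φ W
    · obtain ⟨i, hi⟩ := hmod W
      exact ⟨i, hi, iff_of_true ((hφ W).mpr h i hi) h⟩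
    · have hne : ¬ Entails satA satC (OW 𝕊 W) c := fun hE => h ((hφ W).mp hE)
      rw [Entails] at hne
      push_neg at hne
      obtain ⟨i, hi, hic⟩ := hne
      exact ⟨i, hi, iff_of_false hic h⟩
  choose g hg1 hg2 using hiFun
  set t := n + 1 with htdef
  set Φ : Set (Fin t → (V → Bool)) := {W | ∃ i : Fin t, φ (W i)} with hΦ
  set E : Set ((Fin t → I) × (Fin t → (V → Bool))) := {x | ∃ s : Fin t, satC (x.1 s) c} with hE
  -- the canonical step model
  let p : PMF (Fin t → (V → Bool)) := PMF.ofFintype (pathProb μ T t) (pathProb_sum μ T n)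
  let f : (Fin t → (V → Bool)) → (Fin t → I) × (Fin t → (V → Bool)) :=
    fun W => (fun s => g (W s), W)
  let q : PMF ((Fin t → I) × (Fin t → (V → Bool))) := p.map f
  have q_apply : ∀ (i : Fin t → I) (W : Fin t → (V → Bool)),
      q (i, W) = if i = (fun s => g (W s)) then pathProb μ T t W else 0 := by
    intro i W
    show (p.map f) (i, W) = _
    rw [PMF.map_apply]
    rw [tsum_eq_single W (fun a ha => by
      rw [if_neg]
      intro hcontra
      exact ha (congrArg Prod.snd hcontra).symm)]
    by_cases h : i = fun s => g (W s)
    · rw [if_pos h, if_pos (by simp [f, h]), PMF.ofFintype_apply]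
    · rw [if_neg h, if_neg (by simp [f, Prod.ext_iff]; intro h'; exact absurd h' h)]
  have hstep : IsStepModel satA μ T 𝕊 t q := by
    refine ⟨?_, ?_, ?_⟩
    · rw [show q.support = f '' p.support from PMF.support_map f p]
      exact (Set.toFinite p.support).image f
    · intro iw hiw s
      rw [show q.support = f '' p.support from PMF.support_map f p] at hiw
      obtain ⟨W, -, rfl⟩ := hiw
      exact hg1 (W s)
    · intro W
      rw [tsum_eq_single (fun s => g (W s)) (fun i hi => by rw [q_apply, if_neg hi])]
      rw [q_apply, if_pos rfl]
  have hPqt : Pqt satC t q c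
      = ∑' W : Fin t → (V → Bool), Φ.indicator (pathProb μ T t) W := by
    rw [Pqt, ENNReal.tsum_prod', ENNReal.tsum_comm]
    refine tsum_congr fun W => ?_
    rw [tsum_eq_single (fun s => g (W s)) (fun i hi => by
      rw [Set.indicator_apply]
      split
      · rw [q_apply, if_neg hi]
      · rfl)]
    by_cases hW : W ∈ Φ
    · have hmem : ((fun s => g (W s), W) :
          (Fin t → I) × (Fin t → (V → Bool))) ∈ E := by
        obtain ⟨s, hs⟩ := hW
        exact ⟨s, (hg2 (W s)).mpr hs⟩
      rw [Set.indicator_of_mem hmem, Set.indicator_of_mem hW, q_apply, if_pos rfl]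
    · have hmem : ((fun s => g (W s), W) :
          (Fin t → I) × (Fin t → (V → Bool))) ∉ E := by
        rintro ⟨s, hs⟩
        exact hW ⟨s, (hg2 (W s)).mp hs⟩
      rw [Set.indicator_of_notMem hmem, Set.indicator_of_notMem hW]
  refine le_antisymm (sInf_le ⟨q, hstep, hPqt.symm⟩) (le_sInf ?_)
  rintro x ⟨q', ⟨hfin', hmod', hmarg'⟩, rfl⟩
  set E' : Set ((Fin t → I) × (Fin t → (V → Bool))) := {x | ∃ s : Fin t, φ (x.2 s)} with hE'
  have step1 : ∑' W : Fin t → (V → Bool), Φ.indicator (pathProb μ T t) W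
      = ∑' (W : Fin t → (V → Bool)) (i : Fin t → I), E'.indicator (⇑q') (i, W) := by
    refine tsum_congr fun W => ?_
    by_cases hW : W ∈ Φ
    · rw [Set.indicator_of_mem hW, ← hmarg' W]
      exact tsum_congr fun i =>
        (Set.indicator_of_mem (show ((i, W) : _) ∈ E' from hW) _).symm
    · rw [Set.indicator_of_notMem hW]
      have : ∀ i : Fin t → I, E'.indicator (⇑q') (i, W) = 0 := fun i =>
        Set.indicator_of_notMem (show ((i, W) : _) ∉ E' from fun h => hW h) _
      simp [this]
  rw [step1, ← ENNReal.tsum_comm, ← ENNReal.tsum_prod', Pqt]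
  refine ENNReal.tsum_le_tsum fun iw => ?_
  by_cases hmem : iw ∈ E'
  · rw [Set.indicator_of_mem hmem]
    by_cases h0 : q' iw = 0
    · rw [h0]
      exact zero_le
    · obtain ⟨s, hs⟩ := hmem
      have hsat : satC (iw.1 s) c :=
        (hφ (iw.2 s)).mpr hs (iw.1 s)
          (hmod' iw ((q'.mem_support_iff iw).mpr h0) s)
      rw [Set.indicator_of_mem (show iw ∈ {x : (Fin t → I) × (Fin t → (V → Bool)) |
        ∃ s : Fin t, satC (x.1 s) c} from ⟨s, hsat⟩)]
  · rw [Set.indicator_of_notMem hmem]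
    exact zero_le


end DBL
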